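/- arXiv:0710.3637 — 2 statements merged into one kernel-verified Lean document; each statement's English description precedes it below -/
import Mathlib

section
/- Let n ≥ 2 and let f be a C^∞ strictly convex function on a domain in ℝⁿ satisfying equation (1.3). Then for all indices i, j one has ρ · ∂²ρ/∂x_i∂x_j = (∂ρ/∂x_i)(∂ρ/∂x_j) at every point, and consequently Δρ = ((n+4)/2) ‖∇ρ‖²/ρ, where ‖·‖ and Δ are taken with respect to the Calabi metric of f. -/
noncomputable section

/-- The `i`-th partial derivative of a function on `ℝⁿ`. -/
def pd {n : ℕ} (i : Fin n) (f : (Fin n → ℝ) → ℝ) : (Fin n → ℝ) → ℝ :=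
  fun x => fderiv ℝ f x (Pi.single i 1)

/-- The Hessian matrix `(∂²f/∂x_i∂x_j)`. -/
def hess {n : ℕ} (f : (Fin n → ℝ) → ℝ) (x : Fin n → ℝ) : Matrix (Fin n) (Fin n) ℝ :=
  Matrix.of fun i j => pd i (pd j f) x

/-- `ρ = (det(f_{ij}))^{−1/(n+2)}`. -/
def rhoF {n : ℕ} (f : (Fin n → ℝ) → ℝ) (x : Fin n → ℝ) : ℝ :=
  (hess f x).det ^ (-(1 : ℝ) / (n + 2))

/-- `⟨∇φ, ∇ψ⟩ = Σ f^{ij} φ_i ψ_j`, the Calabi-metric inner product of gradients. -/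
def calInner {n : ℕ} (f φ ψ : (Fin n → ℝ) → ℝ) (x : Fin n → ℝ) : ℝ :=
  ∑ i : Fin n, ∑ j : Fin n, (hess f x)⁻¹ i j * pd i φ x * pd j ψ x

/-- The Laplace–Beltrami operator of the Calabi metric `G = Σ f_{ij} dx_i dx_j`:
`Δφ = Σ f^{ij} ∂²φ/∂x_i∂x_j + ((n+2)/2)(1/ρ) Σ f^{ij} ρ_j φ_i`. -/
def calLap {n : ℕ} (f φ : (Fin n → ℝ) → ℝ) (x : Fin n → ℝ) : ℝ :=
  (∑ i : Fin n, ∑ j : Fin n, (hess f x)⁻¹ i j * pd i (pd j φ) x)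
    + (((n : ℝ) + 2) / 2) * (1 / rhoF f x) *
        ∑ i : Fin n, ∑ j : Fin n, (hess f x)⁻¹ i j * pd j (rhoF f) x * pd i φ x

/-- For a smooth strictly convex solution of `det(f_{ij}) = exp(Σ d_i x_i + d_0)`,
one has `ρ·ρ_{ij} = ρ_i ρ_j` for all `i, j`, and consequently
`Δρ = ((n+4)/2)‖∇ρ‖²/ρ` with respect to the Calabi metric. -/
theorem rho_hessian_identity (n : ℕ) (hn : 2 ≤ n)
    (Ω : Set (Fin n → ℝ)) (hΩo : IsOpen Ω)
    (f : (Fin n → ℝ) → ℝ) (hf : ContDiffOn ℝ (⊤ : ℕ∞) f Ω)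
    (hconv : ∀ x ∈ Ω, (hess f x).PosDef)
    (d : Fin n → ℝ) (d0 : ℝ)
    (hpde : ∀ x ∈ Ω,
      (hess f x).det = Real.exp ((∑ i : Fin n, d i * x i) + d0)) :
    ∀ x ∈ Ω,
      (∀ i j : Fin n,
        rhoF f x * pd i (pd j (rhoF f)) x = pd i (rhoF f) x * pd j (rhoF f) x) ∧
      calLap f (rhoF f) x =
        (((n : ℝ) + 4) / 2) * calInner f (rhoF f) (rhoF f) x / rhoF f x := by
  classical
  intro x hx
  set k : ℝ := -(1 : ℝ) / ((n : ℝ) + 2) with hk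
  set L : (Fin n → ℝ) →L[ℝ] ℝ := ∑ i : Fin n, d i • ContinuousLinearMap.proj i with hL
  have hLapp : ∀ v : Fin n → ℝ, L v = ∑ i : Fin n, d i * v i := by
    intro v
    simp [hL, ContinuousLinearMap.sum_apply]
  have hLsingle : ∀ j : Fin n, L (Pi.single j 1) = d j := by
    intro j
    rw [hLapp]
    simp [Pi.single_apply]
  set g : (Fin n → ℝ) → ℝ := fun z => Real.exp ((L z + d0) * k) with hg
  have hgpos : ∀ y, 0 < g y := fun y => Real.exp_pos _
  have hAderiv : ∀ y, HasFDerivAt (fun z => (L z + d0) * k) (k • L) y := by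
    intro y
    exact ((L.hasFDerivAt.add_const d0).mul_const k)
  have hgderiv : ∀ y, HasFDerivAt g (g y • (k • L)) y := fun y => (hAderiv y).exp
  have hpdg : ∀ (j : Fin n) (y), pd j g y = g y * (k * d j) := by
    intro j y
    unfold pd
    rw [(hgderiv y).fderiv]
    simp [hLsingle j]
  have hpdpdg : ∀ (i j : Fin n) (y), pd i (pd j g) y = g y * (k * d i) * (k * d j) := by
    intro i j y
    have h1 : pd j g = fun z => g z * (k * d j) := funext fun z => hpdg j z
    rw [h1]
    unfold pd
    rw [((hgderiv y).mul_const (k * d j)).fderiv]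
    simp [hLsingle i]
    ring
  have hrho : ∀ y ∈ Ω, rhoF f y = g y := by
    intro y hy
    unfold rhoF
    rw [hpde y hy, Real.rpow_def_of_pos (Real.exp_pos _), Real.log_exp]
    simp only [hg, hLapp, hk]
  have hpd1 : ∀ y ∈ Ω, ∀ j : Fin n, pd j (rhoF f) y = pd j g y := by
    intro y hy j
    have heq : rhoF f =ᶠ[nhds y] g :=
      Filter.eventuallyEq_of_mem (hΩo.mem_nhds hy) hrho
    show fderiv ℝ (rhoF f) y (Pi.single j 1) = fderiv ℝ g y (Pi.single j 1)
    rw [heq.fderiv_eq]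
  have hpd2 : ∀ i j : Fin n, pd i (pd j (rhoF f)) x = pd i (pd j g) x := by
    intro i j
    have heq : pd j (rhoF f) =ᶠ[nhds x] pd j g :=
      Filter.eventuallyEq_of_mem (hΩo.mem_nhds hx) (fun y hy => hpd1 y hy j)
    show fderiv ℝ (pd j (rhoF f)) x (Pi.single i 1) = fderiv ℝ (pd j g) x (Pi.single i 1)
    rw [heq.fderiv_eq]
  have hρpos : 0 < rhoF f x := by rw [hrho x hx]; exact hgpos x
  have hne : rhoF f x ≠ 0 := ne_of_gt hρpos
  have hident : ∀ i j : Fin n,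
      rhoF f x * pd i (pd j (rhoF f)) x = pd i (rhoF f) x * pd j (rhoF f) x := by
    intro i j
    rw [hrho x hx, hpd1 x hx i, hpd1 x hx j, hpd2 i j, hpdpdg, hpdg, hpdg]
    ring
  refine ⟨hident, ?_⟩
  have hident' : ∀ i j : Fin n,
      pd i (pd j (rhoF f)) x = pd i (rhoF f) x * pd j (rhoF f) x / rhoF f x := by
    intro i j
    rw [← hident i j]
    field_simp
  unfold calLap calInner
  set S : ℝ := ∑ i : Fin n, ∑ j : Fin n,
    (hess f x)⁻¹ i j * pd i (rhoF f) x * pd j (rhoF f) x with hS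
  have e1 : (∑ i : Fin n, ∑ j : Fin n, (hess f x)⁻¹ i j * pd i (pd j (rhoF f)) x)
      = S / rhoF f x := by
    rw [hS, Finset.sum_div]
    refine Finset.sum_congr rfl fun i _ => ?_
    rw [Finset.sum_div]
    refine Finset.sum_congr rfl fun j _ => ?_
    rw [hident' i j]
    ring
  have e2 : (∑ i : Fin n, ∑ j : Fin n,
      (hess f x)⁻¹ i j * pd j (rhoF f) x * pd i (rhoF f) x) = S := by
    rw [hS]
    refine Finset.sum_congr rfl fun i _ => ?_
    refine Finset.sum_congr rfl fun j _ => ?_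
    ring
  rw [e1, e2]
  field_simp
  ring
end
end

section
/- (Remark 3) Let n ≥ 2 and define f : ℝⁿ → ℝ by f(x) = exp(x₁) + Σ_{i=2}^n x_i². Then f is smooth and strictly convex on ℝⁿ, satisfies det(∂²f/∂x_i∂x_j) = exp(x₁ + (n−1) log 2) on all of ℝⁿ (an instance of equation (1.3) with d₁ = 1, d₂ = … = d_n = 0, d₀ = (n−1) log 2), and f is not a polynomial. In particular, equation (1.3) admits non-quadratic smooth strictly convex solutions defined on all of ℝⁿ. -/
noncomputable section

namespace Remark3Aux

variable {n : ℕ}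

lemma hasFDerivAt_exp_proj (j : Fin n) (x : Fin n → ℝ) :
    HasFDerivAt (fun y : Fin n → ℝ => Real.exp (y j))
      (Real.exp (x j) • (ContinuousLinearMap.proj j : (Fin n → ℝ) →L[ℝ] ℝ)) x :=
  (Real.hasDerivAt_exp (x j)).comp_hasFDerivAt (h₂ := Real.exp) x (hasFDerivAt_apply j x)

lemma hasFDerivAt_sq (i : Fin n) (x : Fin n → ℝ) :
    HasFDerivAt (fun y : Fin n → ℝ => (y i) ^ 2)
      ((2 * x i) • (ContinuousLinearMap.proj i : (Fin n → ℝ) →L[ℝ] ℝ)) x := by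
  have h : HasDerivAt (fun t : ℝ => t ^ 2) (2 * x i) (x i) := by
    simpa using hasDerivAt_pow 2 (x i)
  exact h.comp_hasFDerivAt x (hasFDerivAt_apply (𝕜 := ℝ) (F' := fun _ : Fin n => ℝ) i x)

lemma hasFDerivAt_lin (c : ℝ) (j : Fin n) (x : Fin n → ℝ) :
    HasFDerivAt (fun y : Fin n → ℝ => c * y j)
      (c • (ContinuousLinearMap.proj j : (Fin n → ℝ) →L[ℝ] ℝ)) x :=
  (hasFDerivAt_apply j x).const_mul c

lemma pd_exp (i j : Fin n) (x : Fin n → ℝ) :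
    pd i (fun y => Real.exp (y j)) x = if i = j then Real.exp (x j) else 0 := by
  rw [pd, (hasFDerivAt_exp_proj j x).fderiv]
  simp [Pi.single_apply, eq_comm]

lemma pd_lin (c : ℝ) (i j : Fin n) (x : Fin n → ℝ) :
    pd i (fun y => c * y j) x = if i = j then c else 0 := by
  rw [pd, (hasFDerivAt_lin c j x).fderiv]
  simp [Pi.single_apply, eq_comm]

end Remark3Aux

open Remark3Aux in
/-- Remark 3: `f(x) = exp(x₁) + Σ_{i=2}^n x_i²` is a smooth strictly convex
non-polynomial global solution of equation (1.3), with
`det D²f = exp(x₁ + (n−1)log 2)`. -/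
theorem nonquadratic_global_solution (n : ℕ) (hn : 2 ≤ n)
    (f : (Fin n → ℝ) → ℝ)
    (hf : ∀ x : Fin n → ℝ,
      f x = Real.exp (x ⟨0, by omega⟩) +
        ∑ i ∈ Finset.univ.filter (fun i : Fin n => i ≠ ⟨0, by omega⟩), (x i) ^ 2) :
    ContDiff ℝ (⊤ : ℕ∞) f ∧
      (∀ x : Fin n → ℝ, (hess f x).PosDef) ∧
      (∀ x : Fin n → ℝ,
        (hess f x).det =
          Real.exp (x ⟨0, by omega⟩ + ((n : ℝ) - 1) * Real.log 2)) ∧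
      ¬ ∃ P : MvPolynomial (Fin n) ℝ, ∀ x : Fin n → ℝ, f x = MvPolynomial.eval x P := by
  set e0 : Fin n := ⟨0, by omega⟩ with he0
  set S : Finset (Fin n) := Finset.univ.filter (fun i : Fin n => i ≠ e0) with hS
  have hfg : f = fun x => Real.exp (x e0) + ∑ i ∈ S, (x i) ^ 2 := funext hf
  subst hfg
  have hD : ∀ x : Fin n → ℝ,
      HasFDerivAt (fun y : Fin n → ℝ => Real.exp (y e0) + ∑ i ∈ S, (y i) ^ 2)
        (Real.exp (x e0) • (ContinuousLinearMap.proj e0 : (Fin n → ℝ) →L[ℝ] ℝ) +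
          ∑ i ∈ S, (2 * x i) • (ContinuousLinearMap.proj i : (Fin n → ℝ) →L[ℝ] ℝ)) x := by
    intro x
    exact (hasFDerivAt_exp_proj e0 x).add (HasFDerivAt.fun_sum fun i _ => hasFDerivAt_sq i x)
  have hpd : ∀ j : Fin n,
      pd j (fun y : Fin n → ℝ => Real.exp (y e0) + ∑ i ∈ S, (y i) ^ 2) =
        fun x => if j = e0 then Real.exp (x e0) else 2 * x j := by
    intro j
    funext x
    rw [pd, (hD x).fderiv]
    simp only [ContinuousLinearMap.add_apply, ContinuousLinearMap.smul_apply,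
      ContinuousLinearMap.coe_sum', Finset.sum_apply, ContinuousLinearMap.proj_apply,
      Pi.single_apply, smul_eq_mul, mul_ite, mul_one, mul_zero]
    by_cases hj : j = e0
    · rw [if_pos hj, if_pos hj.symm]
      have hz : ∀ i ∈ S, (if i = j then 2 * x i else 0) = 0 := by
        intro i hi
        rw [hS, Finset.mem_filter] at hi
        rw [if_neg (fun h => hi.2 (h.trans hj))]
      rw [Finset.sum_congr rfl hz]
      simp
    · rw [if_neg (fun h => hj h.symm), if_neg hj]
      rw [Finset.sum_eq_single j]
      · rw [if_pos rfl]; ring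
      · intro i _ hij; rw [if_neg hij]
      · intro h; exact absurd (by rw [hS]; simp [hj]) h
  have hhess : ∀ x : Fin n → ℝ,
      hess (fun y : Fin n → ℝ => Real.exp (y e0) + ∑ i ∈ S, (y i) ^ 2) x =
        Matrix.diagonal (fun i => if i = e0 then Real.exp (x e0) else 2) := by
    intro x
    ext i j
    rw [hess, Matrix.of_apply, hpd j]
    by_cases hj : j = e0
    · rw [show (fun x : Fin n → ℝ => if j = e0 then Real.exp (x e0) else 2 * x j) =
          fun x => Real.exp (x e0) from funext (fun x => if_pos hj)]
      rw [pd_exp]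
      by_cases hij : i = j
      · rw [if_pos (hij.trans hj), hij, Matrix.diagonal_apply_eq, if_pos hj]
      · rw [if_neg (fun h => hij (h.trans hj.symm)), Matrix.diagonal_apply_ne _ hij]
    · rw [show (fun x : Fin n → ℝ => if j = e0 then Real.exp (x e0) else 2 * x j) =
          fun x => 2 * x j from funext (fun x => if_neg hj)]
      rw [pd_lin]
      by_cases hij : i = j
      · rw [if_pos hij, hij, Matrix.diagonal_apply_eq, if_neg hj]
      · rw [if_neg hij, Matrix.diagonal_apply_ne _ hij]
  refine ⟨?_, ?_, ?_, ?_⟩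
  · refine ContDiff.add ?_ ?_
    · exact Real.contDiff_exp.comp ((ContinuousLinearMap.proj e0 :
        (Fin n → ℝ) →L[ℝ] ℝ).contDiff)
    · exact ContDiff.sum fun i _ => ((ContinuousLinearMap.proj i :
        (Fin n → ℝ) →L[ℝ] ℝ).contDiff).pow 2
  · intro x
    rw [hhess x, Matrix.posDef_diagonal_iff]
    intro i
    by_cases hi : i = e0
    · simp [hi, Real.exp_pos]
    · simp [hi]
  · intro x
    rw [hhess x, Matrix.det_diagonal]
    rw [← Finset.mul_prod_erase Finset.univ _ (Finset.mem_univ e0)]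
    rw [if_pos rfl]
    have h2 : ∀ i ∈ Finset.univ.erase e0, (if i = e0 then Real.exp (x e0) else 2) = 2 := by
      intro i hi
      rw [if_neg (Finset.ne_of_mem_erase hi)]
    rw [Finset.prod_congr rfl h2, Finset.prod_const]
    have hcard : (Finset.univ.erase e0).card = n - 1 := by
      rw [Finset.card_erase_of_mem (Finset.mem_univ e0)]
      simp
    rw [hcard, Real.exp_add]
    congr 1
    have hn1 : ((n : ℝ) - 1) = ((n - 1 : ℕ) : ℝ) := by
      have h1 : (1 : ℕ) ≤ n := by omega
      push_cast [h1]
      ring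
    rw [hn1, ← Real.exp_log (show (0:ℝ) < 2 by norm_num), ← Real.exp_nat_mul,
      Real.exp_log (show (0:ℝ) < 2 by norm_num)]
  · rintro ⟨P, hP⟩
    set q : Polynomial ℝ :=
      MvPolynomial.aeval (fun i : Fin n => if i = e0 then Polynomial.X else 0) P with hq
    have hqe : ∀ t : ℝ, q.eval t = Real.exp t := by
      intro t
      have h1 := hP ((Pi.single e0 t : Fin n → ℝ))
      dsimp only at h1
      have h3 : ∀ i ∈ S, ((Pi.single e0 t : Fin n → ℝ) i) ^ 2 = 0 := by
        intro i hi
        rw [hS, Finset.mem_filter] at hi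
        rw [Pi.single_apply, if_neg hi.2]
        norm_num
      rw [Finset.sum_congr rfl h3, Finset.sum_const, smul_zero, add_zero,
        Pi.single_eq_same] at h1
      have h4 : q.eval t = (Polynomial.aeval t : Polynomial ℝ →ₐ[ℝ] ℝ) q := by
        rw [Polynomial.coe_aeval_eq_eval]
      rw [h4, hq, MvPolynomial.comp_aeval_apply]
      have h5 : (fun i : Fin n => (Polynomial.aeval t : Polynomial ℝ →ₐ[ℝ] ℝ)
          (if i = e0 then Polynomial.X else 0)) = (Pi.single e0 t : Fin n → ℝ) := by
        funext i
        rw [Pi.single_apply]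
        by_cases hi : i = e0 <;> simp [hi]
      have h6 : (MvPolynomial.aeval (Pi.single e0 t : Fin n → ℝ)) P =
          MvPolynomial.eval (Pi.single e0 t : Fin n → ℝ) P := rfl
      simp only [h5, h6]
      exact h1.symm
    have h4 : Filter.Tendsto (fun t : ℝ => q.eval t / Real.exp t) Filter.atTop (nhds 0) :=
      Polynomial.tendsto_div_exp_atTop q
    have h5 : ∀ t : ℝ, q.eval t / Real.exp t = 1 := by
      intro t; rw [hqe t, div_self (Real.exp_ne_zero t)]
    rw [show (fun t : ℝ => q.eval t / Real.exp t) = fun _ => (1:ℝ) from funext h5] at h4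
    exact zero_ne_one (tendsto_nhds_unique h4 tendsto_const_nhds)
end
end
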